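/- Let σ > 0, let X be a random variable with the centered Gaussian law N(0,σ²), and let l : ℝ² → ℝ be continuously differentiable with bounded partial derivatives. Then the function f_l(x₁, x₂) := −σ⁻² ∫₀¹ (2√(t(1−t)))⁻¹ · E[X · l(√t x₁ + √(1−t) X, x₂)] dt is differentiable in its first variable and satisfies sup_{(x₁,x₂)∈ℝ²} |∂₁f_l(x₁, x₂)| ≤ σ⁻¹ · √(2/π) · sup_{(x₁,x₂)∈ℝ²} |∂₁l(x₁, x₂)|. -/

import Mathlib

open MeasureTheory ProbabilityTheory

/-- Partial derivative of `f : ℝ × ℝ → ℝ` in its first variable. -/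
noncomputable def pderiv1 (f : ℝ × ℝ → ℝ) (p : ℝ × ℝ) : ℝ :=
  deriv (fun y => f (y, p.2)) p.1

/-- Partial derivative of `f : ℝ × ℝ → ℝ` in its second variable. -/
noncomputable def pderiv2 (f : ℝ × ℝ → ℝ) (p : ℝ × ℝ) : ℝ :=
  deriv (fun y => f (p.1, y)) p.2

/-- The Stein solution
`f_l(x₁,x₂) = −σ⁻² ∫₀¹ (2√(t(1−t)))⁻¹ E[X l(√t x₁ + √(1−t) X, x₂)] dt`. -/
noncomputable def steinSol {Ω : Type*} [MeasurableSpace Ω] (P : Measure Ω)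
    (X : Ω → ℝ) (σ : ℝ) (l : ℝ × ℝ → ℝ) : ℝ × ℝ → ℝ :=
  fun p => -(σ ^ 2)⁻¹ *
    ∫ t in (0:ℝ)..1, (2 * Real.sqrt (t * (1 - t)))⁻¹ *
      ∫ ω, X ω * l (Real.sqrt t * p.1 + Real.sqrt (1 - t) * X ω, p.2) ∂P

/-! ### Auxiliary lemmas -/

section Aux

open Real Set intervalIntegral Filter

lemma sk_int_Ioi_mul_exp {b : ℝ} (hb : 0 < b) :
    ∫ x in Set.Ioi (0:ℝ), x * Real.exp (-b * x^2) = (2*b)⁻¹ := by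
  have A : ∀ x : ℝ, HasDerivAt (fun x => -(2*b)⁻¹ * Real.exp (-b * x^2))
      (x * Real.exp (-b * x^2)) x := by
    intro x
    convert ((hasDerivAt_pow 2 x).const_mul (-b)).exp.const_mul (-(2*b)⁻¹) using 1
    · rfl
    · rfl
    field_simp
    ring
  have B : Filter.Tendsto (fun y : ℝ => -(2*b)⁻¹ * Real.exp (-b * y^2))
      Filter.atTop (nhds 0) := by
    rw [show (0:ℝ) = -(2*b)⁻¹ * 0 by ring]
    apply Filter.Tendsto.const_mul
    apply Real.tendsto_exp_atBot.comp
    have h1 : Filter.Tendsto (fun y : ℝ => b * y^2) Filter.atTop Filter.atTop :=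
      (Filter.tendsto_pow_atTop (by norm_num)).const_mul_atTop hb
    have := Filter.tendsto_neg_atTop_atBot.comp h1
    simpa [Function.comp_def, neg_mul] using this
  have hcont : ContinuousWithinAt (fun x : ℝ => -(2*b)⁻¹ * Real.exp (-b * x^2)) (Set.Ici 0) 0 :=
    (continuous_const.mul (Real.continuous_exp.comp (by continuity))).continuousWithinAt
  have := MeasureTheory.integral_Ioi_of_hasDerivAt_of_tendsto
    (f := fun x => -(2*b)⁻¹ * Real.exp (-b * x^2))
    (f' := fun x => x * Real.exp (-b * x^2)) (a := 0)
    hcont (fun x _ => A x)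
    ((integrable_mul_exp_neg_mul_sq hb).integrableOn) B
  rw [this]
  simp

lemma sk_gauss_integral_eq {v : NNReal} (hv : v ≠ 0) (g : ℝ → ℝ) :
    ∫ x, g x ∂(gaussianReal 0 v) = ∫ x, gaussianPDFReal 0 v x * g x := by
  rw [gaussianReal_of_var_ne_zero _ hv]
  have h1 : (gaussianPDF 0 v) = fun x => ((gaussianPDFReal 0 v x).toNNReal : ENNReal) := rfl
  rw [h1, integral_withDensity_eq_integral_smul
    ((measurable_gaussianPDFReal 0 v).real_toNNReal) g]
  congr 1; funext x
  rw [NNReal.smul_def, Real.coe_toNNReal _ (gaussianPDFReal_nonneg 0 v x)]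
  rfl

lemma sk_gauss_integrable_iff {v : NNReal} (hv : v ≠ 0) (g : ℝ → ℝ) :
    Integrable g (gaussianReal 0 v) ↔
      Integrable (fun x => gaussianPDFReal 0 v x * g x) volume := by
  rw [gaussianReal_of_var_ne_zero _ hv]
  have h1 : (gaussianPDF 0 v) = fun x => ((gaussianPDFReal 0 v x).toNNReal : ENNReal) := rfl
  rw [h1, integrable_withDensity_iff_integrable_smul
    ((measurable_gaussianPDFReal 0 v).real_toNNReal)]
  constructor <;> intro h <;> [skip; skip] <;>
  · apply h.congr; filter_upwards with x
    rw [NNReal.smul_def, Real.coe_toNNReal _ (gaussianPDFReal_nonneg 0 v x)]; rfl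

lemma sk_var_ne_zero {σ : ℝ} (hσ : 0 < σ) : (σ^2).toNNReal ≠ 0 := by
  simp only [ne_eq, Real.toNNReal_eq_zero, not_le]; positivity

lemma sk_pdf_eq {σ : ℝ} (hσ : 0 < σ) (x : ℝ) : gaussianPDFReal 0 (σ^2).toNNReal x
    = (Real.sqrt (2*Real.pi*σ^2))⁻¹ * Real.exp (-(2*σ^2)⁻¹ * x^2) := by
  have hvc : ((σ^2).toNNReal : ℝ) = σ^2 := Real.coe_toNNReal _ (by positivity)
  rw [gaussianPDFReal, hvc]
  congr 1
  rw [sub_zero]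
  congr 1
  field_simp

lemma sk_gauss_abs_moment {σ : ℝ} (hσ : 0 < σ) :
    ∫ x, |x| ∂(gaussianReal 0 (Real.toNNReal (σ^2))) = σ * Real.sqrt (2/Real.pi) := by
  have hπ := Real.pi_pos
  have hv : (σ^2).toNNReal ≠ 0 := sk_var_ne_zero hσ
  rw [sk_gauss_integral_eq hv]
  have hb : (0:ℝ) < (2*σ^2)⁻¹ := by positivity
  calc ∫ x, gaussianPDFReal 0 (σ^2).toNNReal x * |x|
      = (Real.sqrt (2*Real.pi*σ^2))⁻¹ * ∫ x, |x| * Real.exp (-(2*σ^2)⁻¹ * x^2) := by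
        rw [← MeasureTheory.integral_const_mul]
        congr 1; funext x; rw [sk_pdf_eq hσ x]; ring
    _ = (Real.sqrt (2*Real.pi*σ^2))⁻¹ *
        (2 * ∫ x in Set.Ioi (0:ℝ), x * Real.exp (-(2*σ^2)⁻¹ * x^2)) := by
        congr 1
        rw [← integral_comp_abs (f := fun y => y * Real.exp (-(2*σ^2)⁻¹ * y^2))]
        congr 1; funext x; rw [sq_abs]
    _ = (Real.sqrt (2*Real.pi*σ^2))⁻¹ * (2 * (2*(2*σ^2)⁻¹)⁻¹) := by
        rw [sk_int_Ioi_mul_exp hb]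
    _ = σ * Real.sqrt (2/Real.pi) := by
        have h1 : Real.sqrt (2*Real.pi*σ^2) = Real.sqrt (2*Real.pi) * σ := by
          rw [Real.sqrt_mul (by positivity), Real.sqrt_sq hσ.le]
        have h2 : Real.sqrt (2/Real.pi) = Real.sqrt 2 / Real.sqrt Real.pi :=
          Real.sqrt_div (by norm_num) _
        have h3 : Real.sqrt (2*Real.pi) = Real.sqrt 2 * Real.sqrt Real.pi :=
          Real.sqrt_mul (by norm_num) _
        have h4 : Real.sqrt 2 > 0 := by positivity
        have h5 : Real.sqrt Real.pi > 0 := Real.sqrt_pos.mpr hπ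
        have h6 : Real.sqrt 2 * Real.sqrt 2 = 2 := Real.mul_self_sqrt (by norm_num)
        rw [h1, h2, h3]
        field_simp
        nlinarith [h6, sq_nonneg σ, mul_pos h4 h5, sq_nonneg (Real.sqrt 2),
          mul_pos (mul_pos hσ hσ) h5]

lemma sk_gauss_int_abs {σ : ℝ} (hσ : 0 < σ) :
    Integrable (fun x => |x|) (gaussianReal 0 (Real.toNNReal (σ^2))) := by
  rw [sk_gauss_integrable_iff (sk_var_ne_zero hσ)]
  have hb : (0:ℝ) < (2*σ^2)⁻¹ := by positivity
  apply (((integrable_mul_exp_neg_mul_sq hb).abs).const_mul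
    ((Real.sqrt (2*Real.pi*σ^2))⁻¹)).congr
  filter_upwards with x
  rw [sk_pdf_eq hσ x, abs_mul, abs_of_nonneg (Real.exp_pos _).le]
  ring

lemma sk_gauss_int_sq {σ : ℝ} (hσ : 0 < σ) :
    Integrable (fun x => x^2) (gaussianReal 0 (Real.toNNReal (σ^2))) := by
  rw [sk_gauss_integrable_iff (sk_var_ne_zero hσ)]
  have hb : (0:ℝ) < (2*σ^2)⁻¹ := by positivity
  have h := (integrable_rpow_mul_exp_neg_mul_sq hb (s := 2) (by norm_num)).const_mul
    ((Real.sqrt (2*Real.pi*σ^2))⁻¹)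
  apply h.congr
  filter_upwards with x
  rw [sk_pdf_eq hσ x, show ((2:ℝ) : ℝ) = ((2:ℕ) : ℝ) by norm_num, Real.rpow_natCast]
  ring

lemma sk_pderiv1_hasDerivAt {l : ℝ × ℝ → ℝ} (hl : ContDiff ℝ 1 l) (q : ℝ × ℝ) :
    HasDerivAt (fun y => l (y, q.2)) (pderiv1 l q) q.1 :=
  (((hl.differentiable one_ne_zero) (q.1, q.2)).comp q.1
      (DifferentiableAt.prodMk differentiableAt_id (differentiableAt_const _))).hasDerivAt

lemma sk_pderiv1_continuous {l : ℝ × ℝ → ℝ} (hl : ContDiff ℝ 1 l) :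
    Continuous (fun q => pderiv1 l q) := by
  have hfd : ∀ q : ℝ×ℝ, pderiv1 l q = fderiv ℝ l q ((1:ℝ),(0:ℝ)) := by
    intro q
    have h2 : HasDerivAt (fun y => ((y, q.2) : ℝ×ℝ)) ((1:ℝ),(0:ℝ)) q.1 :=
      (hasDerivAt_id q.1).prodMk (hasDerivAt_const q.1 q.2)
    have h3 := ((hl.differentiable one_ne_zero (q.1,q.2)).hasFDerivAt).comp_hasDerivAt q.1 h2
    have := h3.deriv
    simpa [pderiv1, Function.comp_def] using this
  have h := ((hl.continuous_fderiv one_ne_zero).clm_apply continuous_const :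
      Continuous fun q : ℝ×ℝ => fderiv ℝ l q ((1:ℝ),(0:ℝ)))
  exact h.congr fun q => (hfd q).symm

lemma sk_growth {l : ℝ × ℝ → ℝ} (hl : ContDiff ℝ 1 l) {C : ℝ}
    (hC : ∀ p, |pderiv1 l p| ≤ C) (x₂ y : ℝ) :
    |l (y, x₂)| ≤ |l (0, x₂)| + C * |y| := by
  have hdiff : ∀ z : ℝ, DifferentiableAt ℝ (fun y => l (y, x₂)) z := fun z =>
    ((hl.differentiable one_ne_zero) (z, x₂)).comp z
      (DifferentiableAt.prodMk differentiableAt_id (differentiableAt_const _))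
  have h := Convex.norm_image_sub_le_of_norm_deriv_le (s := Set.univ) (f := fun y => l (y, x₂))
    (fun z _ => hdiff z) (fun z _ => hC (z, x₂)) convex_univ (Set.mem_univ 0) (Set.mem_univ y)
  simp only [Real.norm_eq_abs, sub_zero] at h
  have := abs_sub_abs_le_abs_sub (l (y, x₂)) (l (0, x₂))
  linarith [abs_nonneg (l (y, x₂) - l (0, x₂))]

lemma sk_inner_hasDerivAt {Ω : Type*} [MeasurableSpace Ω] (P : Measure Ω)
    [IsProbabilityMeasure P] {X : Ω → ℝ} (hX : Measurable X)
    (intabs : Integrable (fun ω => |X ω|) P) (intsq : Integrable (fun ω => X ω^2) P)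
    {l : ℝ × ℝ → ℝ} (hl : ContDiff ℝ 1 l) {C : ℝ} (hC : ∀ p, |pderiv1 l p| ≤ C)
    (x₂ : ℝ) {t : ℝ} (ht0 : 0 ≤ t) (ht1 : t ≤ 1) (x : ℝ) :
    HasDerivAt (fun y => ∫ ω, X ω * l (Real.sqrt t * y + Real.sqrt (1-t) * X ω, x₂) ∂P)
      ((∫ ω, X ω * pderiv1 l (Real.sqrt t * x + Real.sqrt (1-t) * X ω, x₂) ∂P) * Real.sqrt t)
      x := by
  have hC0 : 0 ≤ C := (abs_nonneg _).trans (hC (0,0))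
  have hdcont := sk_pderiv1_continuous hl
  have hst1 : Real.sqrt t ≤ 1 := Real.sqrt_le_one.mpr ht1
  have hs1t1 : Real.sqrt (1-t) ≤ 1 := Real.sqrt_le_one.mpr (by linarith)
  have hld := sk_pderiv1_hasDerivAt hl
  have hgrow := sk_growth hl hC x₂
  have hmeasF : ∀ y : ℝ, AEStronglyMeasurable
      (fun ω => X ω * l (Real.sqrt t * y + Real.sqrt (1-t) * X ω, x₂)) P := by
    intro y
    exact (hX.mul (hl.continuous.measurable.comp
      ((measurable_const.add (hX.const_mul _)).prodMk measurable_const))).aestronglyMeasurable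
  have hmeasF' : AEStronglyMeasurable
      (fun ω => X ω * (pderiv1 l (Real.sqrt t * x + Real.sqrt (1-t) * X ω, x₂) * Real.sqrt t))
      P := by
    exact (hX.mul ((hdcont.measurable.comp
      ((measurable_const.add (hX.const_mul _)).prodMk
        measurable_const)).mul_const _)).aestronglyMeasurable
  have key := hasDerivAt_integral_of_dominated_loc_of_deriv_le (Metric.ball_mem_nhds x one_pos)
    (F := fun y ω => X ω * l (Real.sqrt t * y + Real.sqrt (1-t) * X ω, x₂))
    (F' := fun y ω => X ω *
      (pderiv1 l (Real.sqrt t * y + Real.sqrt (1-t) * X ω, x₂) * Real.sqrt t))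
    (bound := fun ω => C * |X ω|)
    (Filter.Eventually.of_forall hmeasF)
    (by
      apply Integrable.mono' ((intabs.const_mul (|l (0,x₂)| + C*|x|)).add (intsq.const_mul C))
        (hmeasF x)
      filter_upwards with ω
      have h1 : |l (Real.sqrt t * x + Real.sqrt (1-t) * X ω, x₂)|
          ≤ |l (0,x₂)| + C * (|x| + |X ω|) := by
        refine (hgrow _).trans ?_
        have : |Real.sqrt t * x + Real.sqrt (1-t) * X ω| ≤ |x| + |X ω| := by
          refine (abs_add_le _ _).trans ?_
          rw [abs_mul, abs_mul, abs_of_nonneg (Real.sqrt_nonneg _),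
            abs_of_nonneg (Real.sqrt_nonneg _)]
          have := abs_nonneg x; have := abs_nonneg (X ω)
          nlinarith
        nlinarith
      simp only [Pi.add_apply]
      rw [Real.norm_eq_abs, abs_mul]
      have h2 : |X ω| * |X ω| = X ω ^ 2 := by rw [abs_mul_abs_self, sq]
      nlinarith [mul_le_mul_of_nonneg_left h1 (abs_nonneg (X ω)), h2])
    hmeasF'
    (by
      filter_upwards with ω y _
      rw [Real.norm_eq_abs, abs_mul, abs_mul, abs_of_nonneg (Real.sqrt_nonneg _)]
      have h1 := hC (Real.sqrt t * y + Real.sqrt (1-t) * X ω, x₂)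
      have h2 := abs_nonneg (X ω)
      have h3 := abs_nonneg (pderiv1 l (Real.sqrt t * y + Real.sqrt (1-t) * X ω, x₂))
      have h4 := Real.sqrt_nonneg t
      have h5 : |pderiv1 l (Real.sqrt t * y + Real.sqrt (1-t) * X ω, x₂)| * Real.sqrt t
          ≤ C * 1 := mul_le_mul h1 hst1 h4 hC0
      nlinarith [mul_le_mul_of_nonneg_left h5 h2])
    (intabs.const_mul C)
    (by
      filter_upwards with ω y _
      have ha : HasDerivAt (fun y : ℝ => Real.sqrt t * y + Real.sqrt (1-t) * X ω)
          (Real.sqrt t) y := by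
        simpa using ((hasDerivAt_id y).const_mul (Real.sqrt t)).add_const
          (Real.sqrt (1-t) * X ω)
      exact ((hld (Real.sqrt t * y + Real.sqrt (1-t) * X ω, x₂)).comp y ha).const_mul (X ω))
  have h := key.2
  rw [show (∫ ω, X ω *
        (pderiv1 l (Real.sqrt t * x + Real.sqrt (1-t) * X ω, x₂) * Real.sqrt t) ∂P)
      = (∫ ω, X ω * pderiv1 l (Real.sqrt t * x + Real.sqrt (1-t) * X ω, x₂) ∂P)
          * Real.sqrt t by
    rw [← MeasureTheory.integral_mul_const]; congr 1; funext ω; ring] at h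
  exact h

lemma sk_inv_sqrt_eq {x : ℝ} (hx : 0 ≤ x) : (Real.sqrt x)⁻¹ = x ^ (-(1/2) : ℝ) := by
  rw [Real.sqrt_eq_rpow, ← Real.rpow_neg hx]

lemma sk_sqrt_int1 : IntegrableOn (fun t : ℝ => (Real.sqrt t)⁻¹) (Set.Ioc (0:ℝ) 1) volume := by
  apply ((intervalIntegrable_rpow' (r := (-(1/2) : ℝ)) (by norm_num)
    (a := 0) (b := 1)).1).congr_fun ?_ measurableSet_Ioc
  intro t ht; exact (sk_inv_sqrt_eq ht.1.le).symm

lemma sk_sqrt_int2 :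
    IntegrableOn (fun t : ℝ => (Real.sqrt (1-t))⁻¹) (Set.Ioc (0:ℝ) 1) volume := by
  have h := (intervalIntegrable_rpow' (r := (-(1/2) : ℝ)) (by norm_num)
    (a := 0) (b := 1)).comp_sub_left 1
  have h1 := h.2
  simp only [sub_self, sub_zero] at h1
  apply h1.congr_fun ?_ measurableSet_Ioc
  intro t ht
  show (1 - t) ^ (-(1/2) : ℝ) = (Real.sqrt (1-t))⁻¹
  exact (sk_inv_sqrt_eq (by linarith [ht.2] : (0:ℝ) ≤ 1 - t)).symm

lemma sk_int_val : ∫ t in Set.Ioc (0:ℝ) 1, (2 * Real.sqrt (1-t))⁻¹ = 1 := by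
  rw [← intervalIntegral.integral_of_le zero_le_one]
  have h1 : ∀ t ∈ Set.uIcc (0:ℝ) 1, (2 * Real.sqrt (1-t))⁻¹
      = 2⁻¹ * ((1-t) ^ (-(1/2) : ℝ)) := by
    intro t ht
    rw [Set.uIcc_of_le zero_le_one] at ht
    rw [mul_inv, sk_inv_sqrt_eq (by linarith [ht.2] : (0:ℝ) ≤ 1 - t)]
  rw [intervalIntegral.integral_congr h1, intervalIntegral.integral_const_mul]
  have h2 := intervalIntegral.integral_comp_sub_left (a := (0:ℝ)) (b := 1)
    (fun s => s ^ (-(1/2) : ℝ)) 1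
  simp only [sub_zero, sub_self] at h2
  rw [h2, integral_rpow (Or.inl (by norm_num))]
  norm_num

lemma sk_akst {t : ℝ} (ht : t ∈ Set.Ioc (0:ℝ) 1) :
    (2 * Real.sqrt (t * (1-t)))⁻¹ * Real.sqrt t = 2⁻¹ * (Real.sqrt (1-t))⁻¹ := by
  rw [Real.sqrt_mul ht.1.le, mul_inv, mul_inv]
  have h : (Real.sqrt t)⁻¹ * Real.sqrt t = 1 :=
    inv_mul_cancel₀ (Real.sqrt_ne_zero'.mpr ht.1)
  calc 2⁻¹ * ((Real.sqrt t)⁻¹ * (Real.sqrt (1-t))⁻¹) * Real.sqrt t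
      = 2⁻¹ * (Real.sqrt (1-t))⁻¹ * ((Real.sqrt t)⁻¹ * Real.sqrt t) := by ring
    _ = 2⁻¹ * (Real.sqrt (1-t))⁻¹ := by rw [h, mul_one]

lemma sk_aker_le {t : ℝ} (ht : t ∈ Set.Ioc (0:ℝ) 1) :
    (2 * Real.sqrt (t * (1-t)))⁻¹
      ≤ (Real.sqrt 2 / 2) * ((Real.sqrt t)⁻¹ + (Real.sqrt (1-t))⁻¹) := by
  rw [Real.sqrt_mul ht.1.le, mul_inv, mul_inv]
  have hs2 : (0:ℝ) < Real.sqrt 2 := by positivity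
  have hit : 0 ≤ (Real.sqrt t)⁻¹ := by positivity
  have hi1t : 0 ≤ (Real.sqrt (1-t))⁻¹ := by positivity
  rcases le_or_gt t 2⁻¹ with h | h
  · have h1t : (2:ℝ)⁻¹ ≤ 1 - t := by linarith
    have hsq : (Real.sqrt 2)⁻¹ ≤ Real.sqrt (1-t) := by
      rw [← Real.sqrt_inv]
      exact Real.sqrt_le_sqrt h1t
    have hp : 0 < Real.sqrt (1-t) := lt_of_lt_of_le (by positivity) hsq
    have h2 : (Real.sqrt (1-t))⁻¹ ≤ Real.sqrt 2 := by
      rw [← inv_inv (Real.sqrt 2)]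
      exact inv_anti₀ (by positivity) hsq
    nlinarith [mul_le_mul_of_nonneg_left h2 hit]
  · have hsq : (Real.sqrt 2)⁻¹ ≤ Real.sqrt t := by
      rw [← Real.sqrt_inv]
      exact Real.sqrt_le_sqrt h.le
    have h2 : (Real.sqrt t)⁻¹ ≤ Real.sqrt 2 := by
      rw [← inv_inv (Real.sqrt 2)]
      exact inv_anti₀ (by positivity) hsq
    nlinarith [mul_le_mul_of_nonneg_right h2 hi1t]

end Aux

section Key

open Real Set Filter

lemma sk_key {Ω : Type*} [MeasurableSpace Ω] (P : Measure Ω) [IsProbabilityMeasure P]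
    {σ : ℝ} (hσ : 0 < σ) {X : Ω → ℝ} (hX : Measurable X)
    (hlaw : Measure.map X P = gaussianReal 0 (Real.toNNReal (σ ^ 2)))
    {l : ℝ × ℝ → ℝ} (hl : ContDiff ℝ 1 l) {C : ℝ} (hC : ∀ p, |pderiv1 l p| ≤ C)
    (x₂ x₀ : ℝ) :
    ∃ D : ℝ, HasDerivAt (fun y => steinSol P X σ l (y, x₂)) D x₀ ∧
      |D| ≤ σ⁻¹ * Real.sqrt (2 / Real.pi) * C := by
  have hπ := Real.pi_pos
  have hC0 : 0 ≤ C := (abs_nonneg _).trans (hC (0,0))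
  have hdcont := sk_pderiv1_continuous hl
  -- integrability of |X| and X² under P
  have habsm : AEStronglyMeasurable (fun x : ℝ => |x|) (Measure.map X P) := by
    rw [hlaw]; exact (continuous_abs.measurable).aestronglyMeasurable
  have hsqm : AEStronglyMeasurable (fun x : ℝ => x^2) (Measure.map X P) := by
    rw [hlaw]; exact ((continuous_pow 2).measurable).aestronglyMeasurable
  have intabs : Integrable (fun ω => |X ω|) P := by
    have h1 : Integrable (fun x : ℝ => |x|) (Measure.map X P) := by
      rw [hlaw]; exact sk_gauss_int_abs hσ
    have := (integrable_map_measure habsm hX.aemeasurable).mp h1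
    simpa [Function.comp_def] using this
  have intsq : Integrable (fun ω => X ω ^ 2) P := by
    have h1 : Integrable (fun x : ℝ => x^2) (Measure.map X P) := by
      rw [hlaw]; exact sk_gauss_int_sq hσ
    have := (integrable_map_measure hsqm hX.aemeasurable).mp h1
    simpa [Function.comp_def] using this
  set M := ∫ ω, |X ω| ∂P with hMdef
  have hM : M = σ * Real.sqrt (2/Real.pi) := by
    rw [hMdef, ← integral_map hX.aemeasurable habsm, hlaw, sk_gauss_abs_moment hσ]
  have hM0 : 0 ≤ M := by rw [hM]; positivity
  set S := ∫ ω, X ω ^ 2 ∂P with hSdef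
  have hS0 : 0 ≤ S := integral_nonneg fun ω => sq_nonneg _
  set A := |l (0, x₂)| with hAdef
  have hA0 : 0 ≤ A := abs_nonneg _
  set K := (A + C*|x₀|)*M + C*S with hKdef
  have hK0 : 0 ≤ K := add_nonneg
    (mul_nonneg (add_nonneg hA0 (mul_nonneg hC0 (abs_nonneg _))) hM0)
    (mul_nonneg hC0 hS0)
  -- bound on the derivative integrand in ω
  have L2 : ∀ t x : ℝ,
      |∫ ω, X ω * pderiv1 l (Real.sqrt t * x + Real.sqrt (1-t) * X ω, x₂) ∂P| ≤ C * M := by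
    intro t x
    rw [← Real.norm_eq_abs]
    have h : ‖∫ ω, X ω * pderiv1 l (Real.sqrt t * x + Real.sqrt (1-t) * X ω, x₂) ∂P‖
        ≤ ∫ ω, C * |X ω| ∂P := by
      apply norm_integral_le_of_norm_le (intabs.const_mul C)
      filter_upwards with ω
      rw [Real.norm_eq_abs, abs_mul]
      have h1 := hC (Real.sqrt t * x + Real.sqrt (1-t) * X ω, x₂)
      have h2 := abs_nonneg (X ω)
      nlinarith [mul_le_mul_of_nonneg_left h1 h2]
    rw [integral_const_mul, ← hMdef] at h
    exact h
  -- bound on the inner integral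
  have L3 : ∀ t ∈ Set.Icc (0:ℝ) 1, ∀ x : ℝ, |x| ≤ |x₀| + 1 →
      |∫ ω, X ω * l (Real.sqrt t * x + Real.sqrt (1-t) * X ω, x₂) ∂P|
        ≤ K + C * M := by
    intro t ht x hx
    have hst1 : Real.sqrt t ≤ 1 := Real.sqrt_le_one.mpr ht.2
    have hs1t1 : Real.sqrt (1-t) ≤ 1 := Real.sqrt_le_one.mpr (by linarith [ht.1])
    rw [← Real.norm_eq_abs]
    have h : ‖∫ ω, X ω * l (Real.sqrt t * x + Real.sqrt (1-t) * X ω, x₂) ∂P‖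
        ≤ ∫ ω, (A + C*(|x₀|+1)) * |X ω| + C * X ω ^ 2 ∂P := by
      apply norm_integral_le_of_norm_le
        ((intabs.const_mul (A + C*(|x₀|+1))).add (intsq.const_mul C))
      filter_upwards with ω
      simp only [Pi.add_apply]
      rw [Real.norm_eq_abs, abs_mul]
      have h1 : |l (Real.sqrt t * x + Real.sqrt (1-t) * X ω, x₂)|
          ≤ A + C * (|x| + |X ω|) := by
        refine (sk_growth hl hC x₂ _).trans ?_
        rw [← hAdef]
        have : |Real.sqrt t * x + Real.sqrt (1-t) * X ω| ≤ |x| + |X ω| := by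
          refine (abs_add_le _ _).trans ?_
          rw [abs_mul, abs_mul, abs_of_nonneg (Real.sqrt_nonneg _),
            abs_of_nonneg (Real.sqrt_nonneg _)]
          have := abs_nonneg x; have := abs_nonneg (X ω)
          nlinarith
        nlinarith
      have h2 : |X ω| * |X ω| = X ω ^ 2 := by rw [abs_mul_abs_self, sq]
      have h3 : A + C * (|x| + |X ω|) ≤ A + C * ((|x₀|+1) + |X ω|) := by
        nlinarith
      nlinarith [mul_le_mul_of_nonneg_left (h1.trans h3) (abs_nonneg (X ω)), h2]
    refine h.trans ?_
    rw [integral_add (intabs.const_mul _) (intsq.const_mul C),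
      integral_const_mul, integral_const_mul, ← hMdef, ← hSdef, hKdef]
    nlinarith [hM0, hC0]
  -- measurability in t
  have hmeas_aker : Measurable (fun t : ℝ => (2 * Real.sqrt (t*(1-t)))⁻¹) :=
    ((continuous_const.mul ((Real.continuous_sqrt).comp
      (continuous_id.mul (continuous_const.sub continuous_id)))).measurable).inv
  have hjm : ∀ (g : ℝ×ℝ→ℝ), Continuous g → ∀ x : ℝ,
      StronglyMeasurable (fun q : ℝ × Ω =>
        X q.2 * g (Real.sqrt q.1 * x + Real.sqrt (1-q.1) * X q.2, x₂)) := by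
    intro g hg x
    apply Measurable.stronglyMeasurable
    apply (hX.comp measurable_snd).mul
    apply hg.measurable.comp
    apply Measurable.prodMk ?_ measurable_const
    exact ((Real.continuous_sqrt.measurable.comp measurable_fst).mul_const x).add
      ((Real.continuous_sqrt.measurable.comp (measurable_const.sub measurable_fst)).mul
        (hX.comp measurable_snd))
  have hmeasI : ∀ x : ℝ, StronglyMeasurable (fun t : ℝ =>
      ∫ ω, X ω * l (Real.sqrt t * x + Real.sqrt (1-t) * X ω, x₂) ∂P) := fun x =>
    (hjm l hl.continuous x).integral_prod_right'
  have hmeasJ : ∀ x : ℝ, StronglyMeasurable (fun t : ℝ =>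
      ∫ ω, X ω * pderiv1 l (Real.sqrt t * x + Real.sqrt (1-t) * X ω, x₂) ∂P) := fun x =>
    (hjm (fun q => pderiv1 l q) hdcont x).integral_prod_right'
  -- outer dominated differentiation
  have key := hasDerivAt_integral_of_dominated_loc_of_deriv_le (Metric.ball_mem_nhds x₀ one_pos)
    (μ := volume.restrict (Set.Ioc (0:ℝ) 1))
    (F := fun x t => (2 * Real.sqrt (t*(1-t)))⁻¹ *
      ∫ ω, X ω * l (Real.sqrt t * x + Real.sqrt (1-t) * X ω, x₂) ∂P)
    (F' := fun x t => (2 * Real.sqrt (t*(1-t)))⁻¹ *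
      ((∫ ω, X ω * pderiv1 l (Real.sqrt t * x + Real.sqrt (1-t) * X ω, x₂) ∂P)
        * Real.sqrt t))
    (bound := fun t => 2⁻¹ * (Real.sqrt (1-t))⁻¹ * (C * M))
    (x₀ := x₀)
    (Filter.Eventually.of_forall fun x =>
      (hmeas_aker.mul (hmeasI x).measurable).aestronglyMeasurable)
    (by -- integrability at x₀
      apply Integrable.mono'
        (((sk_sqrt_int1.add sk_sqrt_int2).const_mul (Real.sqrt 2 / 2)).mul_const (K + C * M))
        (hmeas_aker.mul (hmeasI x₀).measurable).aestronglyMeasurable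
      filter_upwards [ae_restrict_mem measurableSet_Ioc] with t ht
      have ha0 : 0 ≤ (2 * Real.sqrt (t*(1-t)))⁻¹ := by positivity
      rw [Real.norm_eq_abs, Pi.mul_apply, Pi.add_apply, abs_mul, abs_of_nonneg ha0]
      have h1 := L3 t ⟨ht.1.le, ht.2⟩ x₀ (by linarith [abs_nonneg x₀])
      have h2 := sk_aker_le ht
      have hd0 : 0 ≤ (Real.sqrt t)⁻¹ + (Real.sqrt (1-t))⁻¹ := by positivity
      calc (2 * Real.sqrt (t*(1-t)))⁻¹ * |∫ ω, X ω *
              l (Real.sqrt t * x₀ + Real.sqrt (1-t) * X ω, x₂) ∂P|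
          ≤ ((Real.sqrt 2 / 2) * ((Real.sqrt t)⁻¹ + (Real.sqrt (1-t))⁻¹)) * (K + C*M) := by
            apply mul_le_mul h2 h1 (abs_nonneg _) (by positivity)
        _ = (Real.sqrt 2 / 2) * ((Real.sqrt t)⁻¹ + (Real.sqrt (1-t))⁻¹) * (K + C*M) := by
            ring)
    ((hmeas_aker.mul ((hmeasJ x₀).measurable.mul Real.continuous_sqrt.measurable)).aestronglyMeasurable)
    (by -- bound on F'
      filter_upwards [ae_restrict_mem measurableSet_Ioc] with t ht x _
      have ha0 : 0 ≤ (2 * Real.sqrt (t*(1-t)))⁻¹ := by positivity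
      rw [Real.norm_eq_abs, abs_mul, abs_of_nonneg ha0, abs_mul,
        abs_of_nonneg (Real.sqrt_nonneg t)]
      have h1 := L2 t x
      calc (2 * Real.sqrt (t*(1-t)))⁻¹ *
            (|∫ ω, X ω * pderiv1 l (Real.sqrt t * x + Real.sqrt (1-t) * X ω, x₂) ∂P|
              * Real.sqrt t)
          ≤ (2 * Real.sqrt (t*(1-t)))⁻¹ * ((C * M) * Real.sqrt t) := by
            apply mul_le_mul_of_nonneg_left ?_ ha0
            exact mul_le_mul_of_nonneg_right h1 (Real.sqrt_nonneg t)
        _ = ((2 * Real.sqrt (t*(1-t)))⁻¹ * Real.sqrt t) * (C * M) := by ring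
        _ = 2⁻¹ * (Real.sqrt (1-t))⁻¹ * (C * M) := by rw [sk_akst ht])
    (((sk_sqrt_int2.const_mul 2⁻¹).mul_const (C * M)))
    (by -- differentiability
      filter_upwards [ae_restrict_mem measurableSet_Ioc] with t ht x _
      exact (sk_inner_hasDerivAt P hX intabs intsq hl hC x₂ ht.1.le ht.2 x).const_mul
        ((2 * Real.sqrt (t*(1-t)))⁻¹))
  have hD := key.2
  refine ⟨-(σ^2)⁻¹ * ∫ t in Set.Ioc (0:ℝ) 1, (2 * Real.sqrt (t*(1-t)))⁻¹ *
      ((∫ ω, X ω * pderiv1 l (Real.sqrt t * x₀ + Real.sqrt (1-t) * X ω, x₂) ∂P)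
        * Real.sqrt t), ?_, ?_⟩
  · have hfun : (fun y => steinSol P X σ l (y, x₂))
        = fun y => -(σ^2)⁻¹ * ∫ t in Set.Ioc (0:ℝ) 1, (2 * Real.sqrt (t*(1-t)))⁻¹ *
          ∫ ω, X ω * l (Real.sqrt t * y + Real.sqrt (1-t) * X ω, x₂) ∂P := by
      funext y
      rw [steinSol]
      simp only
      rw [intervalIntegral.integral_of_le zero_le_one]
    rw [hfun]
    exact hD.const_mul _
  · rw [abs_mul, abs_neg, abs_inv, abs_of_nonneg (by positivity : (0:ℝ) ≤ σ^2)]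
    have hB : |∫ t in Set.Ioc (0:ℝ) 1, (2 * Real.sqrt (t*(1-t)))⁻¹ *
        ((∫ ω, X ω * pderiv1 l (Real.sqrt t * x₀ + Real.sqrt (1-t) * X ω, x₂) ∂P)
          * Real.sqrt t)| ≤ C * M := by
      rw [← Real.norm_eq_abs]
      have h : ‖∫ t in Set.Ioc (0:ℝ) 1, (2 * Real.sqrt (t*(1-t)))⁻¹ *
          ((∫ ω, X ω * pderiv1 l (Real.sqrt t * x₀ + Real.sqrt (1-t) * X ω, x₂) ∂P)
            * Real.sqrt t)‖
          ≤ ∫ t in Set.Ioc (0:ℝ) 1, 2⁻¹ * (Real.sqrt (1-t))⁻¹ * (C * M) := by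
        apply norm_integral_le_of_norm_le
          ((sk_sqrt_int2.const_mul 2⁻¹).mul_const (C * M))
        filter_upwards [ae_restrict_mem measurableSet_Ioc] with t ht
        have ha0 : 0 ≤ (2 * Real.sqrt (t*(1-t)))⁻¹ := by positivity
        rw [Real.norm_eq_abs, abs_mul, abs_of_nonneg ha0, abs_mul,
          abs_of_nonneg (Real.sqrt_nonneg t)]
        calc (2 * Real.sqrt (t*(1-t)))⁻¹ *
            (|∫ ω, X ω * pderiv1 l (Real.sqrt t * x₀ + Real.sqrt (1-t) * X ω, x₂) ∂P|
              * Real.sqrt t)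
            ≤ (2 * Real.sqrt (t*(1-t)))⁻¹ * ((C * M) * Real.sqrt t) := by
              apply mul_le_mul_of_nonneg_left ?_ ha0
              exact mul_le_mul_of_nonneg_right (L2 t x₀) (Real.sqrt_nonneg t)
          _ = ((2 * Real.sqrt (t*(1-t)))⁻¹ * Real.sqrt t) * (C * M) := by ring
          _ = 2⁻¹ * (Real.sqrt (1-t))⁻¹ * (C * M) := by rw [sk_akst ht]
      refine h.trans ?_
      have hIv : ∫ t in Set.Ioc (0:ℝ) 1, 2⁻¹ * (Real.sqrt (1-t))⁻¹ * (C * M)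
          = (C * M) := by
        rw [integral_mul_const]
        have : ∀ t : ℝ, 2⁻¹ * (Real.sqrt (1-t))⁻¹ = (2 * Real.sqrt (1-t))⁻¹ := by
          intro t; rw [mul_inv]
        simp_rw [this]
        rw [sk_int_val, one_mul]
      rw [hIv]
    calc (σ^2)⁻¹ * |∫ t in Set.Ioc (0:ℝ) 1, (2 * Real.sqrt (t*(1-t)))⁻¹ *
          ((∫ ω, X ω * pderiv1 l (Real.sqrt t * x₀ + Real.sqrt (1-t) * X ω, x₂) ∂P)
            * Real.sqrt t)|
        ≤ (σ^2)⁻¹ * (C * M) := by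
          apply mul_le_mul_of_nonneg_left hB (by positivity)
      _ = σ⁻¹ * Real.sqrt (2/Real.pi) * C := by
          rw [hM]
          field_simp

end Key

/-- **Second bound of Lemma `SolStein0`**: `f_l` is differentiable in its first
variable and `sup |∂₁ f_l| ≤ σ⁻¹ √(2/π) sup |∂₁ l|`. -/
theorem steinSol_pderiv1_bound
    {Ω : Type*} [MeasurableSpace Ω] (P : Measure Ω) [IsProbabilityMeasure P]
    (σ : ℝ) (hσ : 0 < σ) (X : Ω → ℝ) (hX : Measurable X)
    (hlaw : Measure.map X P = gaussianReal 0 (Real.toNNReal (σ ^ 2)))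
    (l : ℝ × ℝ → ℝ) (hl : ContDiff ℝ 1 l)
    (hb1 : ∃ C, ∀ p, |pderiv1 l p| ≤ C) (hb2 : ∃ C, ∀ p, |pderiv2 l p| ≤ C) :
    (∀ p : ℝ × ℝ, DifferentiableAt ℝ (fun y => steinSol P X σ l (y, p.2)) p.1) ∧
    ∀ C : ℝ, (∀ p, |pderiv1 l p| ≤ C) →
      ∀ p, |pderiv1 (steinSol P X σ l) p| ≤ σ⁻¹ * Real.sqrt (2 / Real.pi) * C := by
  constructor
  · intro p
    obtain ⟨C, hC⟩ := hb1
    obtain ⟨D, hD, -⟩ := sk_key P hσ hX hlaw hl hC p.2 p.1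
    exact hD.differentiableAt
  · intro C hC p
    obtain ⟨D, hD, hbnd⟩ := sk_key P hσ hX hlaw hl hC p.2 p.1
    have : pderiv1 (steinSol P X σ l) p = D := hD.deriv
    rwa [this]
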